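/- SLT Separation Proposition: Let s1 and s2 be terms of the second-order linear term system SLT with s1 ≠ s2 (as syntactic terms). Then there exist a variable assignment ρ1 and a second-order variable assignment ρ2 such that [|s1|]_{ρ1,ρ2} ≠ [|s2|]_{ρ1,ρ2}. -/
import Mathlib


/-! The second-order linear term system SLT. First-order variables and second-order
variables are both indexed by natural numbers; an arity function assigns each
second-order variable its arity. -/

mutual
/-- Terms of the second-order linear term system. -/
inductive SLT : Type
  | fvar : ℕ → SLT
  | sapp : ℕ → SLTList → SLT

/-- Lists of SLT terms (argument vectors). -/
inductive SLTList : Type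
  | nil : SLTList
  | cons : SLT → SLTList → SLTList
end

mutual
/-- First-order variables occurring in an SLT term. -/
def SLT.fvars : SLT → Finset ℕ
  | .fvar x => {x}
  | .sapp _ ts => ts.fvars

def SLTList.fvars : SLTList → Finset ℕ
  | .nil => ∅
  | .cons t ts => t.fvars ∪ ts.fvars
end

mutual
/-- Second-order variables occurring in an SLT term. -/
def SLT.svars : SLT → Finset ℕ
  | .fvar _ => ∅
  | .sapp G ts => insert G ts.svars

def SLTList.svars : SLTList → Finset ℕ
  | .nil => ∅
  | .cons t ts => t.svars ∪ ts.svars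
end

def SLTList.length : SLTList → ℕ
  | .nil => 0
  | .cons _ ts => ts.length + 1

def SLTList.toList : SLTList → List SLT
  | .nil => []
  | .cons t ts => t :: ts.toList

mutual
/-- Well-formedness (linearity): in `G(t1,...,tn)` the number of arguments is the arity
of `G`, `G` occurs in no `ti`, and the `ti` have pairwise disjoint (first- and
second-order) variables. -/
def SLT.wf (arity : ℕ → ℕ) : SLT → Prop
  | .fvar _ => True
  | .sapp G ts => ts.length = arity G ∧ G ∉ ts.svars ∧ ts.pairwiseDisjoint ∧ ts.wf arity

def SLTList.wf (arity : ℕ → ℕ) : SLTList → Prop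
  | .nil => True
  | .cons t ts => t.wf arity ∧ ts.wf arity

def SLTList.pairwiseDisjoint : SLTList → Prop
  | .nil => True
  | .cons t ts =>
      (Disjoint (t.fvars ∪ t.svars) (ts.fvars ∪ ts.svars)) ∧ ts.pairwiseDisjoint
end

mutual
/-- Interpretation of an SLT term for assignments `ρ1 : Var → {0,1}` and
`ρ2 : SVar → ({0,1}* → {0,1})`. -/
def SLT.interp (ρ1 : ℕ → Bool) (ρ2 : ℕ → List Bool → Bool) : SLT → Bool
  | .fvar x => ρ1 x
  | .sapp G ts => ρ2 G (ts.interp ρ1 ρ2)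

def SLTList.interp (ρ1 : ℕ → Bool) (ρ2 : ℕ → List Bool → Bool) : SLTList → List Bool
  | .nil => []
  | .cons t ts => t.interp ρ1 ρ2 :: ts.interp ρ1 ρ2
end

/-- `h` acts on boolean vectors of length `n` as a constant function or as a
(positive) projection. -/
def IsConstOrProj (n : ℕ) (h : List Bool → Bool) : Prop :=
  (∃ b : Bool, ∀ bs : List Bool, bs.length = n → h bs = b) ∨
  (∃ i : Fin n, ∀ bs : List Bool, bs.length = n → h bs = bs.getD i.1 false)

mutual
theorem SLT.interp_congr (ρ1 : ℕ → Bool) (ρ2 ρ2' : ℕ → List Bool → Bool) :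
    ∀ t : SLT, (∀ G ∈ t.svars, ρ2 G = ρ2' G) → t.interp ρ1 ρ2 = t.interp ρ1 ρ2'
  | .fvar _, _ => rfl
  | .sapp G ts, h => by
      have hG : ρ2 G = ρ2' G := h G (by simp [SLT.svars])
      have hts := SLTList.interp_congr ρ1 ρ2 ρ2' ts
        (fun H hH => h H (by simp [SLT.svars, hH]))
      simp only [SLT.interp, hts, hG]

theorem SLTList.interp_congr (ρ1 : ℕ → Bool) (ρ2 ρ2' : ℕ → List Bool → Bool) :
    ∀ ts : SLTList, (∀ G ∈ ts.svars, ρ2 G = ρ2' G) → ts.interp ρ1 ρ2 = ts.interp ρ1 ρ2'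
  | .nil, _ => rfl
  | .cons t ts, h => by
      have h1 := SLT.interp_congr ρ1 ρ2 ρ2' t
        (fun H hH => h H (by simp [SLTList.svars, hH]))
      have h2 := SLTList.interp_congr ρ1 ρ2 ρ2' ts
        (fun H hH => h H (by simp [SLTList.svars, hH]))
      simp only [SLTList.interp, h1, h2]
end

theorem SLTList.toList_length : ∀ ts : SLTList, ts.toList.length = ts.length
  | .nil => rfl
  | .cons _ ts => by simp [SLTList.toList, SLTList.length, SLTList.toList_length ts]

theorem SLTList.toList_inj : ∀ ts us : SLTList, ts.toList = us.toList → ts = us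
  | .nil, .nil, _ => rfl
  | .nil, .cons _ _, h => by simp [SLTList.toList] at h
  | .cons _ _, .nil, h => by simp [SLTList.toList] at h
  | .cons t ts, .cons u us, h => by
      simp only [SLTList.toList, List.cons.injEq] at h
      rw [h.1, SLTList.toList_inj ts us h.2]

theorem SLTList.interp_eq_map (ρ1 : ℕ → Bool) (ρ2 : ℕ → List Bool → Bool) :
    ∀ ts : SLTList, ts.interp ρ1 ρ2 = ts.toList.map (SLT.interp ρ1 ρ2)
  | .nil => rfl
  | .cons t ts => by
      simp [SLTList.interp, SLTList.toList, SLTList.interp_eq_map ρ1 ρ2 ts]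

theorem SLTList.wf_of_mem (arity : ℕ → ℕ) :
    ∀ ts : SLTList, ts.wf arity → ∀ t ∈ ts.toList, t.wf arity
  | .cons u ts, h, t, ht => by
      rcases List.mem_cons.mp ht with rfl | ht
      · exact h.1
      · exact SLTList.wf_of_mem arity ts h.2 t ht

theorem SLTList.svars_of_mem : ∀ ts : SLTList, ∀ t ∈ ts.toList, t.svars ⊆ ts.svars
  | .cons u ts, t, ht => by
      rcases List.mem_cons.mp ht with rfl | ht
      · simp [SLTList.svars]
      · exact (SLTList.svars_of_mem ts t ht).trans (by simp [SLTList.svars])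

theorem SLTList.sizeOf_of_mem : ∀ ts : SLTList, ∀ t ∈ ts.toList, sizeOf t < sizeOf ts
  | .cons u ts, t, ht => by
      rcases List.mem_cons.mp ht with rfl | ht
      · simp; omega
      · have := SLTList.sizeOf_of_mem ts t ht
        simp; omega

theorem list_exists_diff {α : Type} :
    ∀ l1 l2 : List α, l1.length = l2.length → l1 ≠ l2 →
      ∃ (i : ℕ) (t u : α), l1[i]? = some t ∧ l2[i]? = some u ∧ t ≠ u
  | [], [], _, hne => absurd rfl hne
  | t :: l1, u :: l2, hlen, hne => by
      by_cases htu : t = u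
      · subst htu
        have hne' : l1 ≠ l2 := fun h => hne (by rw [h])
        obtain ⟨i, a, b, h1, h2, h3⟩ :=
          list_exists_diff l1 l2 (by simpa using hlen) hne'
        exact ⟨i + 1, a, b, by simpa using h1, by simpa using h2, h3⟩
      · exact ⟨0, t, u, by simp, by simp, htu⟩

theorem slt_sep_aux (arity : ℕ → ℕ) :
    ∀ s1 s2 : SLT, s1.wf arity → s2.wf arity → s1 ≠ s2 →
      ∃ (ρ1 : ℕ → Bool) (ρ2 : ℕ → List Bool → Bool),
        (∀ G, IsConstOrProj (arity G) (ρ2 G)) ∧ s1.interp ρ1 ρ2 ≠ s2.interp ρ1 ρ2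
  | .fvar x, .fvar y, _, _, hne => by
      refine ⟨fun z => z = x, fun _ _ => false,
        fun _ => Or.inl ⟨false, fun _ _ => rfl⟩, ?_⟩
      have hxy : y ≠ x := fun h => hne (by rw [h])
      simp [SLT.interp, hxy]
  | .fvar _, .sapp _ _, _, _, _ => by
      exact ⟨fun _ => true, fun _ _ => false,
        fun _ => Or.inl ⟨false, fun _ _ => rfl⟩, by simp [SLT.interp]⟩
  | .sapp _ _, .fvar _, _, _, _ => by
      exact ⟨fun _ => true, fun _ _ => false,
        fun _ => Or.inl ⟨false, fun _ _ => rfl⟩, by simp [SLT.interp]⟩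
  | .sapp G ts, .sapp H us, h1, h2, hne => by
      by_cases hGH : G = H
      · subst hGH
        have hts : ts ≠ us := fun h => hne (by rw [h])
        have hlen : ts.toList.length = us.toList.length := by
          rw [SLTList.toList_length, SLTList.toList_length, h1.1, h2.1]
        obtain ⟨i, t, u, hti, hui, htu⟩ := list_exists_diff _ _ hlen
          (fun h => hts (SLTList.toList_inj _ _ h))
        have htmem : t ∈ ts.toList := List.mem_of_getElem? hti
        have humem : u ∈ us.toList := List.mem_of_getElem? hui
        have hwt := SLTList.wf_of_mem arity ts h1.2.2.2 t htmem
        have hwu := SLTList.wf_of_mem arity us h2.2.2.2 u humem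
        obtain ⟨ρ1, ρ2, hcp, hsep⟩ := slt_sep_aux arity t u hwt hwu htu
        have hi : i < arity G := by
          have hl : i < ts.toList.length := (List.getElem?_eq_some_iff.mp hti).1
          rwa [SLTList.toList_length, h1.1] at hl
        set ρ2' := Function.update ρ2 G (fun bs => bs.getD i false) with hρ2'
        have hupd : ∀ K, K ≠ G → ρ2' K = ρ2 K :=
          fun K hK => Function.update_of_ne hK _ _
        refine ⟨ρ1, ρ2', ?_, ?_⟩
        · intro K
          by_cases hK : K = G
          · subst hK
            exact Or.inr ⟨⟨i, hi⟩, fun bs _ => by simp [hρ2']⟩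
          · rw [hupd K hK]; exact hcp K
        · have key : ∀ (vs : SLTList) (v : SLT), G ∉ vs.svars → vs.toList[i]? = some v →
              (SLT.sapp G vs).interp ρ1 ρ2' = v.interp ρ1 ρ2 := by
            intro vs v hGvs hvi
            have e1 : vs.interp ρ1 ρ2' = vs.interp ρ1 ρ2 :=
              SLTList.interp_congr ρ1 ρ2' ρ2 vs
                (fun K hK => hupd K (fun h => hGvs (h ▸ hK)))
            show ρ2' G (vs.interp ρ1 ρ2') = _
            rw [e1, SLTList.interp_eq_map, hρ2', Function.update_self,
              List.getD_eq_getElem?_getD, List.getElem?_map, hvi]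
            rfl
          rw [key ts t h1.2.1 hti, key us u h2.2.1 hui]
          exact hsep
      · refine ⟨fun _ => false, fun K _ => K = G,
          fun K => Or.inl ⟨decide (K = G), fun _ _ => rfl⟩, ?_⟩
        have : H ≠ G := fun h => hGH h.symm
        simp [SLT.interp, this]
termination_by s1 => sizeOf s1
decreasing_by
  have h := SLTList.sizeOf_of_mem ts t htmem
  simp only [SLT.sapp.sizeOf_spec]
  omega

/-- **SLT Separation Proposition.** Syntactically distinct well-formed SLT terms can be
separated by a variable assignment together with a second-order variable assignment
sending each second-order variable to a constant or projection function. -/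
theorem slt_separation (arity : ℕ → ℕ) (harity : ∀ G, 1 ≤ arity G)
    (s1 s2 : SLT) (h1 : s1.wf arity) (h2 : s2.wf arity) (hne : s1 ≠ s2) :
    ∃ (ρ1 : ℕ → Bool) (ρ2 : ℕ → List Bool → Bool),
      (∀ G, IsConstOrProj (arity G) (ρ2 G)) ∧
      s1.interp ρ1 ρ2 ≠ s2.interp ρ1 ρ2 := by
  exact slt_sep_aux arity s1 s2 h1 h2 hne
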